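/- arXiv:2009.12450 — 5 statements merged into one kernel-verified Lean document; each statement's English description precedes it below -/
import Mathlib

section
/- Let d be a positive integer. If some prime q ≡ 3 (mod 4) divides d to an odd power, then r₂(d) = 0. Otherwise, writing g_p for the exponent of each prime p ≡ 1 (mod 4) in the factorization of d, one has r₂(d) = 4 · ∏_{p ≡ 1 (mod 4)} (g_p + 1). -/
open Finset

/-- `r₂(d)`: the number of ordered pairs `(a,b) ∈ ℤ²` with `a² + b² = d`. -/
noncomputable def r2 (d : ℕ) : ℕ :=
  ((Finset.Icc (-(d : ℤ)) (d : ℤ) ×ˢ Finset.Icc (-(d : ℤ)) (d : ℤ)).filter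
    (fun p => p.1 ^ 2 + p.2 ^ 2 = (d : ℤ))).card

/-- `n_k`: the smallest positive integer `n` with `r₂(n) = 4k`. -/
noncomputable def nk (k : ℕ) : ℕ := sInf {n : ℕ | 0 < n ∧ r2 n = 4 * k}

/-- The `i`-th prime congruent to 1 mod 4 (0-indexed, increasing order). -/
noncomputable def nthP1 (i : ℕ) : ℕ := Nat.nth (fun p => p.Prime ∧ p % 4 = 1) i

namespace TwoSqAux
open GaussianInt

/-- count of Gaussian integers of norm `d` -/
noncomputable def G (d : ℕ) : ℕ := Nat.card {z : GaussianInt // z.norm = (d : ℤ)}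

lemma norm_def' (z : GaussianInt) : z.norm = z.re * z.re + z.im * z.im := by
  rw [Zsqrtd.norm_def]; ring

lemma r2_eq_G (d : ℕ) (hd : 0 < d) : r2 d = G d := by
  rw [r2, G, ← Nat.card_eq_finsetCard]
  refine Nat.card_congr ?_
  have hd1 : (1 : ℤ) ≤ (d : ℤ) := by exact_mod_cast hd
  refine
    { toFun := fun p => ⟨⟨p.1.1, p.1.2⟩, ?_⟩
      invFun := fun z => ⟨(z.1.re, z.1.im), ?_⟩
      left_inv := fun p => by ext <;> rfl
      right_inv := fun z => by
        apply Subtype.ext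
        rfl }
  · have := p.2
    simp only [Finset.mem_filter] at this
    rw [norm_def']
    have h := this.2
    dsimp at h ⊢
    nlinarith [h]
  · have hz := z.2
    have h : z.1.re ^ 2 + z.1.im ^ 2 = (d : ℤ) := by rw [norm_def'] at hz; nlinarith [hz]
    simp only [Finset.mem_filter, Finset.mem_product, Finset.mem_Icc]
    refine ⟨⟨⟨?_, ?_⟩, ?_, ?_⟩, h⟩ <;>
      nlinarith [sq_nonneg z.1.re, sq_nonneg z.1.im, sq_nonneg (z.1.re + d), sq_nonneg (z.1.re - d),
        sq_nonneg (z.1.im + d), sq_nonneg (z.1.im - d)]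

lemma r2_one : r2 1 = 4 := by decide

lemma G_one : G 1 = 4 := by rw [← r2_eq_G 1 one_pos, r2_one]

end TwoSqAux

namespace Part2
open GaussianInt

lemma norm_dvd_norm {z w : GaussianInt} (h : z ∣ w) : z.norm ∣ w.norm := by
  obtain ⟨c, rfl⟩ := h; rw [Zsqrtd.norm_mul]; exact dvd_mul_right _ _

lemma prime_of_norm_prime {π : GaussianInt} (h : Prime π.norm) : Prime π := by
  rw [← UniqueFactorizationMonoid.irreducible_iff_prime]
  constructor
  · intro hu
    have h1 := Zsqrtd.norm_eq_one_iff.2 hu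
    exact h.not_unit (Int.isUnit_iff_natAbs_eq.mpr h1)
  · intro a b hab
    have hnorm : a.norm * b.norm = π.norm := by rw [← Zsqrtd.norm_mul, ← hab]
    rcases h.irreducible.isUnit_or_isUnit hnorm.symm with hu | hu
    · exact Or.inl (Zsqrtd.norm_eq_one_iff.1 (Int.isUnit_iff_natAbs_eq.mp hu))
    · exact Or.inr (Zsqrtd.norm_eq_one_iff.1 (Int.isUnit_iff_natAbs_eq.mp hu))

lemma mult_star (π z : GaussianInt) :
    multiplicity (star π) (star z) = multiplicity π z :=
  multiplicity_map_eq (starMulAut : GaussianInt ≃* GaussianInt)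

lemma mfin {π : GaussianInt} (hπ : Prime π) {z : GaussianInt} (hz : z ≠ 0) :
    FiniteMultiplicity π z :=
  FiniteMultiplicity.of_not_isUnit hπ.not_isUnit hz

lemma cast_nat_ne_zero {m : ℕ} (hm : 0 < m) : (m : GaussianInt) ≠ 0 := by
  intro h
  have := GaussianInt.norm_eq_zero.mpr h
  rw [Zsqrtd.norm_natCast] at this
  have h2 : (m : ℤ) = 0 := by nlinarith [this]
  have h3 : m = 0 := by exact_mod_cast h2
  omega

end Part2

namespace Part3
open GaussianInt Part2 TwoSqAux

lemma G_assoc_case {π : GaussianInt} (hπ : Prime π) (hstar : Associated (star π) π)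
    {t m : ℕ} (ht : π.norm = (t : ℤ)) (hmd : ¬ π ∣ (m : GaussianInt)) (hm : 0 < m) (e : ℕ) :
    G (t ^ e * m) = G m := by
  have ht0 : 0 < t := by
    rcases Nat.eq_zero_or_pos t with h | h
    · exfalso
      apply hπ.ne_zero
      apply GaussianInt.norm_eq_zero.mp
      rw [ht, h]; rfl
    · exact h
  have hd0 : 0 < t ^ e * m := Nat.mul_pos (Nat.pow_pos ht0) hm
  have hts : (t : GaussianInt) = π * star π := by
    have h1 := Zsqrtd.norm_eq_mul_conj π
    rw [ht] at h1
    exact_mod_cast h1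
  have hmultt : multiplicity π (t : GaussianInt) = 2 := by
    rw [hts, multiplicity_mul hπ (mfin hπ (by rw [← hts]; exact cast_nat_ne_zero ht0)),
      multiplicity_self, multiplicity_eq_of_associated_right hstar, multiplicity_self]
  set f : {w : GaussianInt // w.norm = (m : ℤ)} →
      {z : GaussianInt // z.norm = ((t ^ e * m : ℕ) : ℤ)} :=
    fun w => ⟨π ^ e * w.1, by
      have hnp : (π ^ e).norm = π.norm ^ e := map_pow (Zsqrtd.normMonoidHom) π e
      rw [Zsqrtd.norm_mul, hnp, ht, w.2]; push_cast; ring⟩ with hf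
  have hb : Function.Bijective f := by
    constructor
    · rintro ⟨w, hw⟩ ⟨w', hw'⟩ h
      simp only [hf, Subtype.mk.injEq] at h ⊢
      exact mul_left_cancel₀ (pow_ne_zero _ hπ.ne_zero) h
    · rintro ⟨z, hz⟩
      have hz0 : z ≠ 0 := by
        intro h
        rw [h, Zsqrtd.norm_zero] at hz
        have h4 : ((t ^ e * m : ℕ) : ℤ) = 0 := hz.symm
        have h5 : t ^ e * m = 0 := by exact_mod_cast h4
        omega
      have key : z * star z = ((t ^ e * m : ℕ) : GaussianInt) := by
        have h1 := Zsqrtd.norm_eq_mul_conj z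
        rw [hz] at h1
        exact_mod_cast h1.symm
      have hstz : multiplicity π (star z) = multiplicity π z := by
        calc multiplicity π (star z) = multiplicity (star π) (star z) :=
              multiplicity_eq_of_associated_left hstar
          _ = multiplicity π z := mult_star π z
      have hcount : multiplicity π (z * star z) = 2 * multiplicity π z := by
        rw [multiplicity_mul hπ (mfin hπ (mul_ne_zero hz0 (star_ne_zero.mpr hz0))), hstz]
        ring
      have hcount2 : multiplicity π ((t ^ e * m : ℕ) : GaussianInt) = 2 * e := by
        have hc : ((t ^ e * m : ℕ) : GaussianInt) = (t : GaussianInt) ^ e * (m : GaussianInt) := by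
          push_cast; ring
        rw [hc, multiplicity_mul hπ
            (mfin hπ (mul_ne_zero (pow_ne_zero _ (cast_nat_ne_zero ht0)) (cast_nat_ne_zero hm))),
          (mfin hπ (cast_nat_ne_zero ht0)).multiplicity_pow hπ, hmultt,
          multiplicity_eq_zero.mpr hmd]
        ring
      have hv : multiplicity π z = e := by
        rw [key, hcount2] at hcount
        omega
      obtain ⟨w, hwz⟩ : π ^ e ∣ z := hv ▸ pow_multiplicity_dvd π z
      have hwn : w.norm = (m : ℤ) := by
        have hnp : (π ^ e).norm = π.norm ^ e := map_pow (Zsqrtd.normMonoidHom) π e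
        have h2 : ((t ^ e * m : ℕ) : ℤ) = (t : ℤ) ^ e * w.norm := by
          rw [← hz, hwz, Zsqrtd.norm_mul, hnp, ht]
        have h3 : (t : ℤ) ^ e * (m : ℤ) = (t : ℤ) ^ e * w.norm := by
          push_cast at h2 ⊢; linarith [h2]
        exact (mul_left_cancel₀ (pow_ne_zero _ (by exact_mod_cast ht0.ne')) h3).symm
      exact ⟨⟨w, hwn⟩, Subtype.ext hwz.symm⟩
  exact (Nat.card_eq_of_bijective f hb).symm

end Part3

namespace Part4
open GaussianInt Part2 Part3 TwoSqAux

lemma G_odd_case {q g m : ℕ} (hq : q.Prime) (hq3 : q % 4 = 3) (hg : Odd g)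
    (hqm : ¬ q ∣ m) (hm : 0 < m) : G (q ^ g * m) = 0 := by
  haveI : Fact q.Prime := ⟨hq⟩
  have hπ : Prime (q : GaussianInt) := (prime_iff_mod_four_eq_three_of_nat_prime q).mpr hq3
  have hq0 : 0 < q := hq.pos
  have hd0 : 0 < q ^ g * m := Nat.mul_pos (Nat.pow_pos hq0) hm
  have hmd : ¬ (q : GaussianInt) ∣ (m : GaussianInt) := by
    intro hdvd
    have h1 : ((q : GaussianInt)).norm ∣ ((m : GaussianInt)).norm := norm_dvd_norm hdvd
    rw [Zsqrtd.norm_natCast, Zsqrtd.norm_natCast] at h1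
    have h2 : (q : ℤ) ∣ (m : ℤ) * (m : ℤ) := dvd_trans (dvd_mul_right _ _) h1
    have h3 : q ∣ m * m := by exact_mod_cast h2
    exact hqm (hq.dvd_of_dvd_pow (n := 2) (by rwa [sq]))
  rw [G, Nat.card_eq_zero]
  refine Or.inl ⟨fun z => ?_⟩
  obtain ⟨z, hz⟩ := z
  have hz0 : z ≠ 0 := by
    intro h
    rw [h, Zsqrtd.norm_zero] at hz
    have h4 : ((q ^ g * m : ℕ) : ℤ) = 0 := hz.symm
    have h5 : q ^ g * m = 0 := by exact_mod_cast h4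
    omega
  have key : z * star z = ((q ^ g * m : ℕ) : GaussianInt) := by
    have h1 := Zsqrtd.norm_eq_mul_conj z
    rw [hz] at h1
    exact_mod_cast h1.symm
  have hstz : multiplicity (q : GaussianInt) (star z) = multiplicity (q : GaussianInt) z := by
    have := mult_star (q : GaussianInt) z
    rwa [star_natCast] at this
  have hcount : multiplicity (q : GaussianInt) (z * star z)
      = 2 * multiplicity (q : GaussianInt) z := by
    rw [multiplicity_mul hπ (mfin hπ (mul_ne_zero hz0 (star_ne_zero.mpr hz0))), hstz]
    ring
  have hcount2 : multiplicity (q : GaussianInt) ((q ^ g * m : ℕ) : GaussianInt) = g := by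
    have hc : ((q ^ g * m : ℕ) : GaussianInt)
        = (q : GaussianInt) ^ g * (m : GaussianInt) := by push_cast; ring
    rw [hc, multiplicity_mul hπ
        (mfin hπ (mul_ne_zero (pow_ne_zero _ (cast_nat_ne_zero hq0)) (cast_nat_ne_zero hm))),
      multiplicity_pow_self_of_prime hπ, multiplicity_eq_zero.mpr hmd]
    omega
  rw [key, hcount2] at hcount
  exact (Nat.not_even_iff_odd.mpr hg) ⟨multiplicity (q : GaussianInt) z, by omega⟩

end Part4

namespace Part5
open GaussianInt Part2 Part3 TwoSqAux

lemma G_split_case {p m : ℕ} (hp : p.Prime) {π : GaussianInt} (hπ : Prime π)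
    (hnorm : π.norm = (p : ℤ)) (hna : ¬ π ∣ star π) (hpm : ¬ p ∣ m) (hm : 0 < m) (g : ℕ) :
    G (p ^ g * m) = (g + 1) * G m := by
  have hp0 : 0 < p := hp.pos
  have hd0 : 0 < p ^ g * m := Nat.mul_pos (Nat.pow_pos hp0) hm
  have hπ' : Prime (star π) := prime_of_norm_prime (by
    rw [Zsqrtd.norm_conj, hnorm]; exact Nat.prime_iff_prime_int.mp hp)
  have hna' : ¬ star π ∣ π := by
    intro h
    obtain ⟨c, hc⟩ := h
    refine hna ⟨star c, ?_⟩
    calc star π = star (star π * c) := by rw [← hc]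
      _ = star c * star (star π) := star_mul _ _
      _ = π * star c := by rw [star_star]; ring
  have hps : (p : GaussianInt) = π * star π := by
    have h1 := Zsqrtd.norm_eq_mul_conj π
    rw [hnorm] at h1
    exact_mod_cast h1
  have hmultp : multiplicity π (p : GaussianInt) = 1 := by
    rw [hps, multiplicity_mul hπ (mfin hπ (by rw [← hps]; exact cast_nat_ne_zero hp0)),
      multiplicity_self, multiplicity_eq_zero.mpr hna]
  have hnp : ∀ (x : GaussianInt) (k : ℕ), (x ^ k).norm = x.norm ^ k :=
    fun x k => map_pow (Zsqrtd.normMonoidHom) x k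
  have hndvd : ∀ w : GaussianInt, w.norm = (m : ℤ) → ∀ ϖ : GaussianInt,
      ϖ.norm = (p : ℤ) → ¬ ϖ ∣ w := by
    intro w hw ϖ hϖ hdvd
    have h1 := norm_dvd_norm hdvd
    rw [hw, hϖ] at h1
    have h3 : p ∣ m := by exact_mod_cast h1
    exact hpm h3
  have hwne : ∀ w : GaussianInt, w.norm = (m : ℤ) → w ≠ 0 := by
    intro w hw h
    rw [h, Zsqrtd.norm_zero] at hw
    have : m = 0 := by exact_mod_cast hw.symm
    omega
  have hπsk : ∀ k : ℕ, multiplicity π ((star π) ^ k) = 0 :=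
    fun k => multiplicity_eq_zero.mpr (fun h => hna (hπ.dvd_of_dvd_pow h))
  set f : Fin (g + 1) × {w : GaussianInt // w.norm = (m : ℤ)} →
      {z : GaussianInt // z.norm = ((p ^ g * m : ℕ) : ℤ)} :=
    fun x => ⟨π ^ (x.1 : ℕ) * (star π) ^ (g - (x.1 : ℕ)) * x.2.1, by
      rw [Zsqrtd.norm_mul, Zsqrtd.norm_mul, hnp, hnp, hnorm, Zsqrtd.norm_conj, hnorm, x.2.2,
        ← pow_add]
      have : (x.1 : ℕ) + (g - (x.1 : ℕ)) = g := by omega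
      rw [this]; push_cast; ring⟩ with hf
  have hvalmult : ∀ (a : ℕ) (w : GaussianInt), w.norm = (m : ℤ) →
      multiplicity π (π ^ a * (star π) ^ (g - a) * w) = a := by
    intro a w hw
    have hw0 := hwne w hw
    have hne1 : π ^ a * (star π) ^ (g - a) ≠ 0 :=
      mul_ne_zero (pow_ne_zero _ hπ.ne_zero) (pow_ne_zero _ hπ'.ne_zero)
    rw [multiplicity_mul hπ (mfin hπ (mul_ne_zero hne1 hw0)),
      multiplicity_mul hπ (mfin hπ hne1),
      multiplicity_pow_self_of_prime hπ, hπsk,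
      multiplicity_eq_zero.mpr (hndvd w hw π hnorm)]
    omega
  have hb : Function.Bijective f := by
    constructor
    · rintro ⟨⟨a, ha⟩, ⟨w, hw⟩⟩ ⟨⟨a', ha'⟩, ⟨w', hw'⟩⟩ h
      simp only [hf, Subtype.mk.injEq] at h
      have haa : a = a' := by
        have h1 := hvalmult a w hw
        have h2 := hvalmult a' w' hw'
        rw [h] at h1
        omega
      subst haa
      have hww : w = w' := mul_left_cancel₀
        (mul_ne_zero (pow_ne_zero _ hπ.ne_zero) (pow_ne_zero _ hπ'.ne_zero)) h
      simp [hww]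
    · rintro ⟨z, hz⟩
      have hz0 : z ≠ 0 := by
        intro h
        rw [h, Zsqrtd.norm_zero] at hz
        have h5 : p ^ g * m = 0 := by exact_mod_cast hz.symm
        omega
      have key : z * star z = ((p ^ g * m : ℕ) : GaussianInt) := by
        have h1 := Zsqrtd.norm_eq_mul_conj z
        rw [hz] at h1
        exact_mod_cast h1.symm
      set a := multiplicity π z with hav
      have hsum : a + multiplicity (star π) z = g := by
        have hb' : multiplicity (star π) z = multiplicity π (star z) := by
          have h1 := mult_star π (star z)
          rwa [star_star] at h1
        have h2 : multiplicity π (z * star z) = a + multiplicity π (star z) :=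
          multiplicity_mul hπ (mfin hπ (mul_ne_zero hz0 (star_ne_zero.mpr hz0)))
        have h3 : multiplicity π ((p ^ g * m : ℕ) : GaussianInt) = g := by
          have hc : ((p ^ g * m : ℕ) : GaussianInt)
              = (p : GaussianInt) ^ g * (m : GaussianInt) := by push_cast; ring
          have hmdvd : ¬ π ∣ (m : GaussianInt) := by
            intro hdvd
            have h1 := norm_dvd_norm hdvd
            rw [hnorm, Zsqrtd.norm_natCast] at h1
            have h2 : (p : ℤ) ∣ (m : ℤ) * (m : ℤ) := dvd_trans (dvd_refl _) h1
            have h3 : p ∣ m * m := by exact_mod_cast h2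
            exact hpm (hp.dvd_of_dvd_pow (n := 2) (by rwa [sq]))
          rw [hc, multiplicity_mul hπ
              (mfin hπ (mul_ne_zero (pow_ne_zero _ (cast_nat_ne_zero hp0))
                (cast_nat_ne_zero hm))),
            (mfin hπ (cast_nat_ne_zero hp0)).multiplicity_pow hπ, hmultp,
            multiplicity_eq_zero.mpr hmdvd]
          omega
        rw [key, h3] at h2
        rw [h2, hb']
      obtain ⟨c, hc⟩ : π ^ a ∣ z := pow_multiplicity_dvd π z
      have hdvd2 : (star π) ^ (g - a) ∣ π ^ a * c := by
        rw [← hc]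
        have : (star π) ^ multiplicity (star π) z ∣ z := pow_multiplicity_dvd _ z
        have hga : g - a = multiplicity (star π) z := by omega
        rwa [hga]
      obtain ⟨w, hcw⟩ : (star π) ^ (g - a) ∣ c :=
        hπ'.pow_dvd_of_dvd_mul_left _ (fun h => hna' (hπ'.dvd_of_dvd_pow h)) hdvd2
      have hzw : z = π ^ a * (star π) ^ (g - a) * w := by rw [hc, hcw]; ring
      have hwn : w.norm = (m : ℤ) := by
        have h2 : ((p ^ g * m : ℕ) : ℤ) = (p : ℤ) ^ g * w.norm := by
          rw [← hz, hzw, Zsqrtd.norm_mul, Zsqrtd.norm_mul, hnp, hnp, hnorm,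
            Zsqrtd.norm_conj, hnorm, ← pow_add]
          have : a + (g - a) = g := by omega
          rw [this]
        have h3 : (p : ℤ) ^ g * (m : ℤ) = (p : ℤ) ^ g * w.norm := by
          push_cast at h2 ⊢; linarith [h2]
        exact (mul_left_cancel₀ (pow_ne_zero _ (by exact_mod_cast hp0.ne')) h3).symm
      have hag : a < g + 1 := by omega
      exact ⟨⟨⟨a, hag⟩, ⟨w, hwn⟩⟩, Subtype.ext hzw.symm⟩
  have hcard := Nat.card_eq_of_bijective f hb
  rw [G, G, ← hcard, Nat.card_prod]
  simp [Nat.card_eq_fintype_card]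

end Part5

namespace Part6
open GaussianInt Part2 Part3 Part4 Part5 TwoSqAux

lemma exists_pi {p : ℕ} (hp : p.Prime) (hp1 : p % 4 = 1) :
    ∃ π : GaussianInt, Prime π ∧ π.norm = (p : ℤ) ∧ ¬ π ∣ star π := by
  haveI : Fact p.Prime := ⟨hp⟩
  obtain ⟨a, b, hab⟩ := Nat.Prime.sq_add_sq (p := p) (by omega)
  refine ⟨⟨(a : ℤ), (b : ℤ)⟩, ?_, ?_, ?_⟩
  case refine_2 =>
    rw [norm_def']
    have : ((a : ℤ) * a + b * b) = ((a ^ 2 + b ^ 2 : ℕ) : ℤ) := by push_cast; ring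
    rw [show (⟨(a : ℤ), (b : ℤ)⟩ : GaussianInt).re = (a : ℤ) from rfl,
      show (⟨(a : ℤ), (b : ℤ)⟩ : GaussianInt).im = (b : ℤ) from rfl, this, hab]
  case refine_1 =>
    apply prime_of_norm_prime
    have hn : (⟨(a : ℤ), (b : ℤ)⟩ : GaussianInt).norm = (p : ℤ) := by
      rw [norm_def']
      have : ((a : ℤ) * a + b * b) = ((a ^ 2 + b ^ 2 : ℕ) : ℤ) := by push_cast; ring
      rw [show (⟨(a : ℤ), (b : ℤ)⟩ : GaussianInt).re = (a : ℤ) from rfl,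
        show (⟨(a : ℤ), (b : ℤ)⟩ : GaussianInt).im = (b : ℤ) from rfl, this, hab]
    rw [hn]
    exact Nat.prime_iff_prime_int.mp hp
  case refine_3 =>
    intro hdvd
    set π : GaussianInt := ⟨(a : ℤ), (b : ℤ)⟩ with hπdef
    have hn : π.norm = (p : ℤ) := by
      rw [norm_def']
      have : ((a : ℤ) * a + b * b) = ((a ^ 2 + b ^ 2 : ℕ) : ℤ) := by push_cast; ring
      rw [show π.re = (a : ℤ) from rfl, show π.im = (b : ℤ) from rfl, this, hab]
    have hsum : π + star π = ((2 * a : ℕ) : GaussianInt) := by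
      have h1 : (π + star π).re = ((2 * a : ℕ) : GaussianInt).re := by
        simp [hπdef, Zsqrtd.re_star]; push_cast; ring
      have h2 : (π + star π).im = ((2 * a : ℕ) : GaussianInt).im := by
        simp [hπdef, Zsqrtd.im_star]
      exact Zsqrtd.ext h1 h2
    have hdvd2a : π ∣ ((2 * a : ℕ) : GaussianInt) := hsum ▸ dvd_add (dvd_refl π) hdvd
    have hnormdvd := norm_dvd_norm hdvd2a
    rw [hn, Zsqrtd.norm_natCast] at hnormdvd
    have hdn : p ∣ 2 * a * (2 * a) := by exact_mod_cast hnormdvd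
    have hpa : p ∣ a := by
      have h1 : p ∣ 2 * a := hp.dvd_of_dvd_pow (n := 2) (by rwa [sq])
      rcases (Nat.Prime.dvd_mul hp).mp h1 with h | h
      · have h2 := Nat.le_of_dvd (by norm_num) h
        have h3 := hp.two_le
        omega
      · exact h
    have hpa2 : p ∣ a ^ 2 := dvd_pow hpa two_ne_zero
    have hpb2 : p ∣ b ^ 2 := (Nat.dvd_add_right hpa2).mp (hab ▸ dvd_refl p)
    have hpb : p ∣ b := hp.dvd_of_dvd_pow hpb2
    have hsq : p * p ∣ a ^ 2 + b ^ 2 := by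
      refine dvd_add ?_ ?_
      · rw [sq]; exact mul_dvd_mul hpa hpa
      · rw [sq]; exact mul_dvd_mul hpb hpb
    rw [hab] at hsq
    have h4 := Nat.le_of_dvd hp.pos hsq
    have h5 := hp.two_le
    nlinarith

end Part6

namespace Part7
open GaussianInt Part2 Part3 Part4 Part5 Part6 TwoSqAux

lemma not_dvd_cast {π : GaussianInt} {p m : ℕ} (hp : p.Prime) (hnorm : π.norm = (p : ℤ))
    (hpm : ¬ p ∣ m) : ¬ π ∣ (m : GaussianInt) := by
  intro hdvd
  have h1 := norm_dvd_norm hdvd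
  rw [hnorm, Zsqrtd.norm_natCast] at h1
  have h3 : p ∣ m * m := by exact_mod_cast h1
  exact hpm (hp.dvd_of_dvd_pow (n := 2) (by rwa [sq]))

lemma G_two_pow (g m : ℕ) (hm : 0 < m) (h2m : ¬ 2 ∣ m) : G (2 ^ g * m) = G m := by
  have hn : (⟨1, 1⟩ : GaussianInt).norm = ((2 : ℕ) : ℤ) := by rw [norm_def']; rfl
  have hπ : Prime (⟨1, 1⟩ : GaussianInt) := prime_of_norm_prime (by
    rw [hn]; exact Nat.prime_iff_prime_int.mp Nat.prime_two)
  have hassoc : Associated (star (⟨1, 1⟩ : GaussianInt)) (⟨1, 1⟩ : GaussianInt) := by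
    refine ⟨⟨⟨0, 1⟩, ⟨0, -1⟩, by decide, by decide⟩, by decide⟩
  exact G_assoc_case hπ hassoc hn (not_dvd_cast Nat.prime_two hn h2m) hm g

lemma G_q3_pow {q : ℕ} (hq : q.Prime) (hq3 : q % 4 = 3) (e m : ℕ) (hm : 0 < m)
    (hqm : ¬ q ∣ m) : G ((q ^ 2) ^ e * m) = G m := by
  haveI : Fact q.Prime := ⟨hq⟩
  have hπ : Prime ((q : ℕ) : GaussianInt) :=
    (prime_iff_mod_four_eq_three_of_nat_prime q).mpr hq3
  have hn : ((q : ℕ) : GaussianInt).norm = ((q ^ 2 : ℕ) : ℤ) := by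
    rw [Zsqrtd.norm_natCast]; push_cast; ring
  have hassoc : Associated (star ((q : ℕ) : GaussianInt)) ((q : ℕ) : GaussianInt) := by
    rw [star_natCast]
  have hqsq : ¬ (q : GaussianInt) ∣ (m : GaussianInt) := by
    intro hdvd
    have h1 := norm_dvd_norm hdvd
    rw [Zsqrtd.norm_natCast, Zsqrtd.norm_natCast] at h1
    have h2 : (q : ℤ) ∣ (m : ℤ) * m := dvd_trans (dvd_mul_right _ _) h1
    have h3 : q ∣ m * m := by exact_mod_cast h2
    exact hqm (hq.dvd_of_dvd_pow (n := 2) (by rwa [sq]))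
  exact G_assoc_case hπ hassoc hn hqsq hm e

lemma G_p1_pow {p : ℕ} (hp : p.Prime) (hp1 : p % 4 = 1) (g m : ℕ) (hm : 0 < m)
    (hpm : ¬ p ∣ m) : G (p ^ g * m) = (g + 1) * G m := by
  obtain ⟨π, hπ, hnorm, hna⟩ := exists_pi hp hp1
  exact G_split_case hp hπ hnorm hna hpm hm g

lemma G_zero_case (d : ℕ) (hd : 0 < d) {q : ℕ} (hq : q.Prime) (hq3 : q % 4 = 3)
    (hodd : Odd (d.factorization q)) : G d = 0 := by
  set g := d.factorization q with hgdef
  have hdm : q ^ g * (d / q ^ g) = d := Nat.ordProj_mul_ordCompl_eq_self d q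
  have hm0 : 0 < d / q ^ g := Nat.ordCompl_pos q (by omega)
  have hqm : ¬ q ∣ (d / q ^ g) := Nat.not_dvd_ordCompl hq (by omega)
  rw [← hdm]
  exact G_odd_case hq hq3 hodd hqm hm0

end Part7

namespace Part8
open GaussianInt Part2 Part3 Part4 Part5 Part6 Part7 TwoSqAux

lemma G_formula : ∀ d : ℕ, 0 < d →
    (∀ q : ℕ, q.Prime → q % 4 = 3 → Even (d.factorization q)) →
    G d = 4 * ∏ p ∈ d.primeFactors.filter (fun p => p % 4 = 1), (d.factorization p + 1) := by
  intro d
  induction d using Nat.strong_induction_on with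
  | _ d ih =>
    intro hd hcond
    rcases Nat.lt_or_ge d 2 with hd2 | hd2
    · have hd1 : d = 1 := by omega
      subst hd1
      simp [G_one, Nat.primeFactors_one]
    · set p := d.minFac with hpdef
      have hp : p.Prime := Nat.minFac_prime (by omega)
      set g := d.factorization p with hgdef
      set m := d / p ^ g with hmdef
      have hdm : p ^ g * m = d := Nat.ordProj_mul_ordCompl_eq_self d p
      have hm0 : 0 < m := Nat.ordCompl_pos p (by omega)
      have hpm : ¬ p ∣ m := Nat.not_dvd_ordCompl hp (by omega)
      have hpd : p ∣ d := Nat.minFac_dvd d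
      have hg0 : 0 < g := hp.factorization_pos_of_dvd (by omega) hpd
      have hpg2 : 2 ≤ p ^ g := le_trans hp.two_le (Nat.le_self_pow (by omega) p)
      have hmlt : m < d := by nlinarith [hdm, hm0, hpg2]
      have hmfact : m.factorization = d.factorization.erase p := Nat.factorization_ordCompl d p
      have hmf : ∀ q, q ≠ p → m.factorization q = d.factorization q := by
        intro q hq
        rw [hmfact, Finsupp.erase_ne hq]
      have hmfp : m.factorization p = 0 := by rw [hmfact, Finsupp.erase_same]
      have hmpf : m.primeFactors = d.primeFactors.erase p := by
        rw [← Nat.support_factorization, hmfact, Finsupp.support_erase,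
          Nat.support_factorization]
      have hppf : p ∈ d.primeFactors := Nat.mem_primeFactors.mpr ⟨hp, hpd, by omega⟩
      have hcondm : ∀ q : ℕ, q.Prime → q % 4 = 3 → Even (m.factorization q) := by
        intro q hq hq3
        by_cases hqp : q = p
        · subst hqp; rw [hmfp]; exact Even.zero
        · rw [hmf q hqp]; exact hcond q hq hq3
      have ihm := ih m hmlt hm0 hcondm
      -- product transfer when p % 4 ≠ 1
      have hprod_ne : p % 4 ≠ 1 →
          ∏ q ∈ d.primeFactors.filter (fun r => r % 4 = 1), (d.factorization q + 1)
          = ∏ q ∈ m.primeFactors.filter (fun r => r % 4 = 1), (m.factorization q + 1) := by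
        intro hp4
        have hset : m.primeFactors.filter (fun r => r % 4 = 1)
            = d.primeFactors.filter (fun r => r % 4 = 1) := by
          ext q
          simp only [hmpf, Finset.mem_filter, Finset.mem_erase]
          constructor
          · rintro ⟨⟨_, hqs⟩, hq1⟩; exact ⟨hqs, hq1⟩
          · rintro ⟨hqs, hq1⟩
            exact ⟨⟨fun h => hp4 (h ▸ hq1), hqs⟩, hq1⟩
        rw [← hset]
        refine Finset.prod_congr rfl fun q hq => ?_
        have hqp : q ≠ p := by
          simp only [hmpf, Finset.mem_filter, Finset.mem_erase] at hq
          exact hq.1.1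
        rw [hmf q hqp]
      rcases hp.eq_two_or_odd' with hp2 | hpodd
      · -- p = 2
        have hGd : G d = G m := by
          rw [← hdm, hp2]
          exact G_two_pow g m hm0 (hp2 ▸ hpm)
        rw [hGd, ihm, hprod_ne (by omega)]
      · have hp4 : p % 4 = 1 ∨ p % 4 = 3 := by
          have := Nat.odd_iff.mp hpodd
          omega
        rcases hp4 with hp41 | hp43
        · -- p ≡ 1 mod 4
          have hGd : G d = (g + 1) * G m := by
            rw [← hdm]
            exact G_p1_pow hp hp41 g m hm0 hpm
          have hinsert : d.primeFactors.filter (fun r => r % 4 = 1)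
              = insert p (m.primeFactors.filter (fun r => r % 4 = 1)) := by
            ext q
            simp only [hmpf, Finset.mem_insert, Finset.mem_filter, Finset.mem_erase]
            constructor
            · rintro ⟨hqs, hq1⟩
              by_cases hqp : q = p
              · exact Or.inl hqp
              · exact Or.inr ⟨⟨hqp, hqs⟩, hq1⟩
            · rintro (rfl | ⟨⟨_, hqs⟩, hq1⟩)
              · exact ⟨hppf, hp41⟩
              · exact ⟨hqs, hq1⟩
          have hnotmem : p ∉ m.primeFactors.filter (fun r => r % 4 = 1) := by
            simp [hmpf, Finset.mem_filter, Finset.mem_erase]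
          rw [hGd, ihm, hinsert, Finset.prod_insert hnotmem]
          have hpr : ∏ q ∈ m.primeFactors.filter (fun r => r % 4 = 1),
              (d.factorization q + 1)
              = ∏ q ∈ m.primeFactors.filter (fun r => r % 4 = 1),
              (m.factorization q + 1) := by
            refine Finset.prod_congr rfl fun q hq => ?_
            have hqp : q ≠ p := by
              simp only [hmpf, Finset.mem_filter, Finset.mem_erase] at hq
              exact hq.1.1
            rw [hmf q hqp]
          rw [hpr]
          ring
        · -- p ≡ 3 mod 4
          have hge : Even g := hcond p hp hp43
          obtain ⟨e, he⟩ := hge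
          have hGd : G d = G m := by
            rw [← hdm]
            have hpe : p ^ g = (p ^ 2) ^ e := by rw [← pow_mul]; congr 1; omega
            rw [hpe]
            exact G_q3_pow hp hp43 e m hm0 hpm
          rw [hGd, ihm, hprod_ne (by omega)]

end Part8


theorem sum_two_squares_formula (d : ℕ) (hd : 0 < d) :
    ((∃ q : ℕ, q.Prime ∧ q % 4 = 3 ∧ Odd (d.factorization q)) → r2 d = 0) ∧
    ((∀ q : ℕ, q.Prime → q % 4 = 3 → Even (d.factorization q)) →
      r2 d = 4 * ∏ p ∈ d.primeFactors.filter (fun p => p % 4 = 1),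
        (d.factorization p + 1)) := by
  constructor
  · rintro ⟨q, hq, hq3, hodd⟩
    rw [TwoSqAux.r2_eq_G d hd]
    exact Part7.G_zero_case d hd hq hq3 hodd
  · intro h
    rw [TwoSqAux.r2_eq_G d hd]
    exact Part8.G_formula d hd h
end

section
/- Let p₁ < p₂ < ⋯ enumerate the primes congruent to 1 mod 4 in increasing order. Let k = q₁^{a₁} ⋯ q_m^{a_m} where q₁ > q₂ > ⋯ > q_m are distinct primes and each a_i ≥ 1, and set A₀ = 0 and A_i = a₁ + ⋯ + a_i. Then the integer n' = ∏_{i=1}^{m} (p_{A_{i−1}+1} · p_{A_{i−1}+2} ⋯ p_{A_i})^{q_i − 1} satisfies r₂(n') = 4k; consequently n_k ≤ n'. -/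
open Finset

noncomputable def Gset (n : ℕ) : Finset GaussianInt :=
  ((Finset.Icc (-(n : ℤ)) (n : ℤ) ×ˢ Finset.Icc (-(n : ℤ)) (n : ℤ)).filter
    (fun p => p.1 ^ 2 + p.2 ^ 2 = (n : ℤ))).image (fun p => ⟨p.1, p.2⟩)

lemma card_Gset (n : ℕ) : (Gset n).card = r2 n := by
  rw [Gset, r2, Finset.card_image_of_injective]
  intro x y h
  have h1 := congrArg Zsqrtd.re h
  have h2 := congrArg Zsqrtd.im h
  simp at h1 h2
  exact Prod.ext h1 h2

lemma mem_Gset {n : ℕ} {z : GaussianInt} : z ∈ Gset n ↔ z.norm = (n : ℤ) := by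
  constructor
  · rintro hz
    simp only [Gset, Finset.mem_image, Finset.mem_filter, Finset.mem_product] at hz
    obtain ⟨p, ⟨_, hp2⟩, rfl⟩ := hz
    simp [Zsqrtd.norm_def]; ring_nf; ring_nf at hp2; linarith
  · intro hz
    simp only [Gset, Finset.mem_image, Finset.mem_filter, Finset.mem_product]
    refine ⟨(z.re, z.im), ⟨⟨?_, ?_⟩, ?_⟩, by ext <;> simp⟩
    · simp only [Finset.mem_Icc]
      have h : z.re ^ 2 + z.im ^ 2 = (n : ℤ) := by
        rw [← hz, Zsqrtd.norm_def]; ring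
      constructor <;> nlinarith [sq_nonneg (z.re - 1), sq_nonneg (z.re + 1), sq_nonneg z.im, sq_nonneg z.re]
    · simp only [Finset.mem_Icc]
      have h : z.re ^ 2 + z.im ^ 2 = (n : ℤ) := by
        rw [← hz, Zsqrtd.norm_def]; ring
      constructor <;> nlinarith [sq_nonneg (z.im - 1), sq_nonneg (z.im + 1), sq_nonneg z.im, sq_nonneg z.re]
    · rw [← hz, Zsqrtd.norm_def]; ring

lemma r2_one : r2 1 = 4 := by decide


set_option synthInstance.maxHeartbeats 1000000 in
lemma prime_of_norm_prime {π : GaussianInt} {p : ℕ} (hp : p.Prime) (h : π.norm = (p : ℤ)) :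
    Prime π := by
  rw [← irreducible_iff_prime]
  constructor
  · rw [← Zsqrtd.norm_eq_one_iff, h]
    simpa using hp.one_lt.ne'
  · intro x y hxy
    have hn : x.norm.natAbs * y.norm.natAbs = p := by
      have := congrArg Zsqrtd.norm hxy
      rw [Zsqrtd.norm_mul, h] at this
      have := congrArg Int.natAbs this
      simpa [Int.natAbs_mul] using this.symm
    rcases hp.eq_one_or_self_of_dvd x.norm.natAbs ⟨y.norm.natAbs, hn.symm⟩ with h' | h'
    · exact Or.inl (Zsqrtd.norm_eq_one_iff.mp h')
    · right
      rw [h'] at hn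
      have : y.norm.natAbs = 1 := by
        have hp0 := hp.pos
        nlinarith
      exact Zsqrtd.norm_eq_one_iff.mp this

lemma norm_dvd_norm {x y : GaussianInt} (h : x ∣ y) : x.norm ∣ y.norm := by
  obtain ⟨c, rfl⟩ := h
  exact ⟨c.norm, (Zsqrtd.norm_mul x c)⟩

lemma pi_not_dvd_conj {π : GaussianInt} {p : ℕ} (hp : p.Prime) (hp4 : p % 4 = 1)
    (h : π.norm = (p : ℤ)) : ¬ π ∣ star π := by
  intro hdvd
  have h1 : π ∣ ((2 * π.re : ℤ) : GaussianInt) := by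
    have : ((2 * π.re : ℤ) : GaussianInt) = π + star π := by
      ext <;> simp <;> ring
    rw [this]; exact dvd_add dvd_rfl hdvd
  have h2 : π ∣ ((2 * π.im : ℤ) : GaussianInt) := by
    have heq : ((2 * π.im : ℤ) : GaussianInt) * ⟨0, 1⟩ = π - star π := by
      ext <;> simp [Zsqrtd.re_mul, Zsqrtd.im_mul] <;> ring
    have hu : IsUnit (⟨0, 1⟩ : GaussianInt) := by
      refine isUnit_iff_exists_inv.mpr ⟨⟨0, -1⟩, ?_⟩
      ext <;> simp [Zsqrtd.re_mul, Zsqrtd.im_mul]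
    have hd : π ∣ ((2 * π.im : ℤ) : GaussianInt) * ⟨0, 1⟩ := by
      rw [heq]; exact dvd_sub dvd_rfl hdvd
    exact (IsUnit.dvd_mul_right hu).mp hd
  have hco : IsCoprime (π.re) (π.im) := by
    rw [Int.isCoprime_iff_gcd_eq_one]
    by_contra hg
    obtain ⟨u, hu⟩ : (Int.gcd π.re π.im : ℤ) ∣ π.re := Int.gcd_dvd_left _ _
    obtain ⟨v, hv⟩ : (Int.gcd π.re π.im : ℤ) ∣ π.im := Int.gcd_dvd_right _ _
    have hdv : ((Int.gcd π.re π.im : ℕ) : ℤ) ^ 2 ∣ (p : ℤ) := by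
      refine ⟨u * u + v * v, ?_⟩
      rw [← h, Zsqrtd.norm_def]
      linear_combination (π.re + (Int.gcd π.re π.im : ℤ) * u) * hu
        + (π.im + (Int.gcd π.re π.im : ℤ) * v) * hv
    have h2' : (Int.gcd π.re π.im) ^ 2 ∣ p := by exact_mod_cast hdv
    have hgp : Int.gcd π.re π.im ∣ p := dvd_trans (dvd_pow_self _ two_ne_zero) h2'
    rcases (Nat.Prime.eq_one_or_self_of_dvd hp _ hgp) with h' | h'
    · exact hg h'
    · rw [h'] at h2'
      have := Nat.le_of_dvd hp.pos h2'
      nlinarith [hp.one_lt]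
  obtain ⟨u, v, huv⟩ := hco
  have key : (2 : GaussianInt) = ((u : ℤ) : GaussianInt) * ((2 * π.re : ℤ) : GaussianInt)
      + ((v : ℤ) : GaussianInt) * ((2 * π.im : ℤ) : GaussianInt) := by
    have hz : (2 : ℤ) = u * (2 * π.re) + v * (2 * π.im) := by linarith [huv]
    calc (2 : GaussianInt) = ((2 : ℤ) : GaussianInt) := by norm_cast
    _ = ((u * (2 * π.re) + v * (2 * π.im) : ℤ) : GaussianInt) := by rw [← hz]
    _ = _ := by push_cast; ring
  have h3 : π ∣ (2 : GaussianInt) := by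
    rw [key]
    exact dvd_add (Dvd.dvd.mul_left h1 _) (Dvd.dvd.mul_left h2 _)
  have h4 : (p : ℤ) ∣ (4 : ℤ) := by
    have := norm_dvd_norm h3
    rw [h] at this
    have h2norm : (2 : GaussianInt).norm = 4 := by
      simp [Zsqrtd.norm_def]
    rwa [h2norm] at this
  have h5 : p ∣ 4 := by exact_mod_cast h4
  have h6 := hp.two_le
  have h7 := Nat.le_of_dvd (by norm_num) h5
  interval_cases p <;> first | omega | (exact absurd hp (by decide))


lemma exists_pi {p : ℕ} (hp : p.Prime) (hp4 : p % 4 = 1) :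
    ∃ π : GaussianInt, π.norm = (p : ℤ) ∧ Prime π ∧ ¬ π ∣ star π := by
  haveI : Fact p.Prime := ⟨hp⟩
  obtain ⟨a, b, hab⟩ := Nat.Prime.sq_add_sq (p := p) (by omega)
  have hn : (⟨(a : ℤ), (b : ℤ)⟩ : GaussianInt).norm = (p : ℤ) := by
    rw [Zsqrtd.norm_def]; push_cast [← hab]; ring
  exact ⟨_, hn, prime_of_norm_prime hp hn, pi_not_dvd_conj hp hp4 hn⟩

lemma gnorm_pow (z : GaussianInt) (k : ℕ) : (z ^ k).norm = z.norm ^ k := by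
  induction k with
  | zero => simp
  | succ k ih => rw [pow_succ, Zsqrtd.norm_mul, ih, pow_succ]

lemma step {p : ℕ} (hp : p.Prime) (hp4 : p % 4 = 1) (e m : ℕ) (hm : ¬ p ∣ m) (hm0 : 0 < m) :
    (Gset (p ^ e * m)).card = (e + 1) * (Gset m).card := by
  classical
  obtain ⟨π, hπn, hπpr, hπc⟩ := exists_pi hp hp4
  have hπ0 : π ≠ 0 := hπpr.ne_zero
  have hπs0 : star π ≠ 0 := by simpa using hπ0
  have hpcast : ((p : ℕ) : GaussianInt) = π * star π := by
    have := Zsqrtd.norm_eq_mul_conj π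
    rw [hπn] at this
    exact_mod_cast this
  have hnd : ∀ w : GaussianInt, w.norm = (m : ℤ) → ¬ π ∣ w := by
    intro w hw hdvd
    have := norm_dvd_norm hdvd
    rw [hπn, hw] at this
    exact hm (by exact_mod_cast this)
  have hcard : ((Finset.range (e+1)) ×ˢ Gset m).card = (e+1) * (Gset m).card := by
    simp [Finset.card_product]
  rw [← hcard]
  refine (Finset.card_bij (fun x _ => π ^ x.1 * (star π) ^ (e - x.1) * x.2) ?_ ?_ ?_).symm
  · rintro ⟨c, w⟩ hx
    simp only [Finset.mem_product, Finset.mem_range] at hx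
    obtain ⟨hc, hw⟩ := hx
    have hwn := mem_Gset.mp hw
    rw [mem_Gset, Zsqrtd.norm_mul, Zsqrtd.norm_mul, gnorm_pow, gnorm_pow, Zsqrtd.norm_conj,
      hπn, hwn, ← pow_add, Nat.add_sub_cancel' (by omega : c ≤ e)]
    push_cast
    ring
  · have key : ∀ c c' : ℕ, ∀ w w' : GaussianInt, w.norm = (m : ℤ) →
        π ^ c * (star π) ^ (e - c) * w = π ^ c' * (star π) ^ (e - c') * w' → ¬ c < c' := by
      intro c c' w w' hw heq hlt
      have h1 : π ^ (c+1) ∣ π ^ c' := pow_dvd_pow _ (by omega)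
      have h2 : π ^ c * π ∣ π ^ c * ((star π) ^ (e - c) * w) := by
        rw [← mul_assoc, heq, ← pow_succ]
        exact (h1.mul_right _).mul_right _
      have h3 : π ∣ (star π) ^ (e - c) * w :=
        (mul_dvd_mul_iff_left (pow_ne_zero c hπ0)).mp h2
      rcases hπpr.dvd_or_dvd h3 with h4 | h4
      · exact hπc (hπpr.dvd_of_dvd_pow h4)
      · exact hnd w hw h4
    rintro ⟨c, w⟩ hx ⟨c', w'⟩ hx' heq
    simp only [Finset.mem_product, Finset.mem_range] at hx hx'
    have hw := mem_Gset.mp hx.2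
    have hw' := mem_Gset.mp hx'.2
    have hcc : c = c' := by
      have k1 := key c c' w w' hw heq
      have k2 := key c' c w' w hw' heq.symm
      omega
    subst hcc
    have hww : w = w' :=
      mul_left_cancel₀ (mul_ne_zero (pow_ne_zero _ hπ0) (pow_ne_zero _ hπs0)) heq
    rw [hww]
  · intro z hz
    have hzn := mem_Gset.mp hz
    have hz0 : z ≠ 0 := by
      intro h
      rw [h, Zsqrtd.norm_zero] at hzn
      have h1 : 0 < p ^ e * m := Nat.mul_pos (Nat.pow_pos (n := e) hp.pos) hm0
      have : ((p ^ e * m : ℕ) : ℤ) = 0 := hzn.symm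
      omega
    set c := Nat.findGreatest (fun c => π ^ c ∣ z) e with hcdef
    have hce : c ≤ e := Nat.findGreatest_le e
    have hπcz : π ^ c ∣ z := by
      have h := Nat.findGreatest_spec (P := fun c => π ^ c ∣ z) (Nat.zero_le e)
        (show π ^ 0 ∣ z by simp)
      simpa only [← hcdef] using h
    have hpe0 : ((p : ℤ)) ^ e ≠ 0 := pow_ne_zero _ (by exact_mod_cast hp.pos.ne')
    have hnot : ¬ π ^ (c+1) ∣ z := by
      rcases eq_or_lt_of_le hce with hEq | hlt
      · intro hdvd
        have hd := norm_dvd_norm hdvd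
        rw [gnorm_pow, hπn, hzn, hEq] at hd
        have hpm : (p:ℤ) ^ (e+1) ∣ (p:ℤ) ^ e * (m:ℤ) := by push_cast at hd ⊢; exact hd
        obtain ⟨t, ht⟩ := hpm
        have : (p:ℤ) ^ e * (m:ℤ) = (p:ℤ) ^ e * ((p:ℤ) * t) := by rw [ht]; ring
        have hdm : (p:ℤ) ∣ (m:ℤ) := ⟨t, mul_left_cancel₀ hpe0 this⟩
        exact hm (by exact_mod_cast hdm)
      · exact Nat.findGreatest_is_greatest (P := fun c => π ^ c ∣ z) (n := e)
          (by rw [← hcdef]; omega) (by omega)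
    obtain ⟨y, hy⟩ := hπcz
    have hπy : ¬ π ∣ y := by
      rintro ⟨t, ht⟩
      exact hnot ⟨t, by rw [hy, ht, pow_succ]; ring⟩
    have hec : c + (e - c) = e := by omega
    have h2 : z * star z = (π * star π) ^ e * (m : GaussianInt) := by
      have h1 : (↑(z.norm) : GaussianInt) = z * star z := Zsqrtd.norm_eq_mul_conj z
      rw [hzn] at h1
      rw [← h1, ← hpcast]
      push_cast
      ring
    have hzz : π ^ c * (star π) ^ c * (y * star y)
        = π ^ c * (star π) ^ c * (π ^ (e-c) * (star π) ^ (e-c) * (m : GaussianInt)) := by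
      calc π ^ c * (star π) ^ c * (y * star y) = (π ^ c * y) * star (π ^ c * y) := by
            rw [star_mul, star_pow]; ring
        _ = z * star z := by rw [← hy]
        _ = (π * star π) ^ e * (m : GaussianInt) := h2
        _ = _ := by nth_rewrite 1 [← hec]; rw [mul_pow, pow_add, pow_add]; ring
    have hyy := mul_left_cancel₀ (mul_ne_zero (pow_ne_zero _ hπ0) (pow_ne_zero _ hπs0)) hzz
    have h5 : π ^ (e-c) ∣ star y := by
      apply hπpr.pow_dvd_of_dvd_mul_left (e-c) hπy
      rw [hyy]
      exact (dvd_mul_right _ _).mul_right _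
    obtain ⟨w, hw⟩ := h5
    have hyw : y = (star π) ^ (e-c) * star w := by
      have := congrArg star hw
      rw [star_star, star_mul, star_pow] at this
      rw [this]; ring
    have hwn : (star w).norm = (m : ℤ) := by
      have h6 : (p:ℤ) ^ e * (m:ℤ) = (p:ℤ) ^ e * w.norm := by
        have := congrArg Zsqrtd.norm hy
        rw [hzn, Zsqrtd.norm_mul, gnorm_pow, hπn, hyw, Zsqrtd.norm_mul, gnorm_pow,
          Zsqrtd.norm_conj, Zsqrtd.norm_conj, hπn] at this
        push_cast at this ⊢
        have hsplit : (p:ℤ) ^ c * (p:ℤ) ^ (e-c) = (p:ℤ) ^ e := by rw [← pow_add, hec]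
        calc (p:ℤ) ^ e * (m:ℤ) = (p:ℤ) ^ c * ((p:ℤ) ^ (e-c) * w.norm) := this
          _ = (p:ℤ) ^ e * w.norm := by rw [← hsplit]; ring
      rw [Zsqrtd.norm_conj]
      exact (mul_left_cancel₀ hpe0 h6).symm
    refine ⟨⟨c, star w⟩, Finset.mem_product.mpr ⟨Finset.mem_range.mpr (by omega), mem_Gset.mpr hwn⟩, ?_⟩
    show π ^ c * star π ^ (e - c) * star w = z
    rw [hy, hyw]
    ring


lemma r2_prod {ι : Type*} [DecidableEq ι] (s : Finset ι) (P f : ι → ℕ) :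
    (∀ j ∈ s, (P j).Prime ∧ P j % 4 = 1) → Set.InjOn P s →
    r2 (∏ j ∈ s, P j ^ f j) = 4 * ∏ j ∈ s, (f j + 1) := by
  induction s using Finset.induction_on with
  | empty => intro _ _; simpa using r2_one
  | @insert j s hj ih =>
    intro hP hinj
    have hjP := hP j (Finset.mem_insert_self j s)
    have hrest0 : 0 < ∏ t ∈ s, P t ^ f t :=
      Finset.prod_pos fun t ht => pow_pos (hP t (Finset.mem_insert_of_mem ht)).1.pos _
    have hpd : ¬ P j ∣ ∏ t ∈ s, P t ^ f t := by
      intro hd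
      obtain ⟨t, ht, htd⟩ := (Nat.Prime.prime hjP.1).exists_mem_finset_dvd hd
      have h1 : P j ∣ P t := (Nat.Prime.prime hjP.1).dvd_of_dvd_pow htd
      have h2 : P j = P t :=
        (Nat.prime_dvd_prime_iff_eq hjP.1 (hP t (Finset.mem_insert_of_mem ht)).1).mp h1
      have : j = t := hinj (Finset.mem_insert_self j s) (Finset.mem_insert_of_mem ht) h2
      exact hj (this ▸ ht)
    rw [Finset.prod_insert hj, Finset.prod_insert hj, ← card_Gset,
      step hjP.1 hjP.2 (f j) _ hpd hrest0, card_Gset,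
      ih (fun t ht => hP t (Finset.mem_insert_of_mem ht))
        (hinj.mono (by simp [Finset.subset_insert]))]
    ring


theorem nk_upper_bound_general (m : ℕ) (hm : 1 ≤ m) (q a : ℕ → ℕ)
    (hq : ∀ i < m, (q i).Prime)
    (hdec : ∀ i j : ℕ, i < j → j < m → q j < q i)
    (ha : ∀ i < m, 1 ≤ a i)
    (k : ℕ) (hk : k = ∏ i ∈ Finset.range m, q i ^ a i)
    (n' : ℕ)
    (hn' : n' = ∏ i ∈ Finset.range m,
        (∏ j ∈ Finset.Ico (∑ t ∈ Finset.range i, a t)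
            (∑ t ∈ Finset.range (i + 1), a t), nthP1 j) ^ (q i - 1)) :
    r2 n' = 4 * k ∧ nk k ≤ n' := by
  classical
  have hinf : {p : ℕ | p.Prime ∧ p % 4 = 1}.Infinite := by
    apply (Nat.infinite_setOf_prime_modEq_one (k := 4) (by norm_num)).mono
    rintro p ⟨hp, hmod⟩
    exact ⟨hp, by simpa [Nat.ModEq] using hmod⟩
  have hP1 : ∀ j : ℕ, (nthP1 j).Prime ∧ nthP1 j % 4 = 1 :=
    fun j => Nat.nth_mem_of_infinite hinf j
  set A : ℕ → ℕ := fun i => ∑ t ∈ Finset.range i, a t with hA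
  set S : Finset ((_ : ℕ) × ℕ) := (Finset.range m).sigma (fun i => Finset.Ico (A i) (A (i+1)))
    with hS
  have hmem : ∀ x : (_ : ℕ) × ℕ, x ∈ S ↔ x.1 ∈ Finset.range m ∧ x.2 ∈ Finset.Ico (A x.1) (A (x.1+1)) := by
    intro x; rw [hS, Finset.mem_sigma]
  have hAmono : ∀ i i' : ℕ, i ≤ i' → A i ≤ A i' := by
    intro i i' h
    exact Finset.sum_le_sum_of_subset (Finset.range_subset_range.mpr h)
  -- n' as a single product
  have hn2 : n' = ∏ x ∈ S, nthP1 x.2 ^ (q x.1 - 1) := by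
    rw [hS, Finset.prod_sigma, hn']
    exact Finset.prod_congr rfl fun i _ => (Finset.prod_pow _ _ _).symm
  have hr2 : r2 n' = 4 * ∏ x ∈ S, ((q x.1 - 1) + 1) := by
    rw [hn2]
    apply r2_prod S (fun x => nthP1 x.2) (fun x => q x.1 - 1)
    · intro x _; exact hP1 x.2
    · intro x hx y hy hxy
      simp only [Finset.mem_coe] at hx hy
      rw [hmem] at hx hy
      have h2 : x.2 = y.2 := Nat.nth_injective hinf hxy
      have h1 : x.1 = y.1 := by
        by_contra hne
        rcases Nat.lt_or_ge x.1 y.1 with hlt | hge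
        · have := hAmono (x.1 + 1) y.1 hlt
          simp only [Finset.mem_range, Finset.mem_Ico] at hx hy
          omega
        · have hlt : y.1 < x.1 := by omega
          have := hAmono (y.1 + 1) x.1 hlt
          simp only [Finset.mem_range, Finset.mem_Ico] at hx hy
          omega
      exact Sigma.ext h1 (heq_of_eq h2)
  have hprod : ∏ x ∈ S, ((q x.1 - 1) + 1) = k := by
    rw [hS, Finset.prod_sigma, hk]
    apply Finset.prod_congr rfl
    intro i hi
    simp only [Finset.mem_range] at hi
    show ∏ _s ∈ Finset.Ico (A i) (A (i+1)), (q i - 1 + 1) = q i ^ a i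
    rw [Finset.prod_const, Nat.card_Ico]
    have h1 : q i - 1 + 1 = q i := Nat.succ_pred_eq_of_pos (hq i hi).pos
    have h2 : A (i+1) - A i = a i := by
      rw [hA]
      simp [Finset.sum_range_succ]
    rw [h1, h2]
  constructor
  · rw [hr2, hprod]
  · apply Nat.sInf_le
    refine ⟨?_, by rw [hr2, hprod]⟩
    rw [hn2]
    exact Finset.prod_pos fun x _ => pow_pos (hP1 x.2).1.pos _
end

section
/- Let N ≥ 3 be an odd integer, set m = (N−1)/2, and let S = {0, m, 2m} × {0, m, 2m} ⊆ L_N be the 3×3 lattice stretched to the size of L_N. Then for every pair of integers (a,b) with 0 ≤ b ≤ a ≤ N−1 and (a,b) ≠ (0,0), one has S_{a,b} > 0 if and only if m divides both a and b. -/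
open Finset

/-- The N×N integer lattice `{(x,y) : 0 ≤ x ≤ N−1, 0 ≤ y ≤ N−1}`. -/
noncomputable def latticeN (N : ℕ) : Finset (ℤ × ℤ) :=
  Finset.Icc (0 : ℤ) ((N : ℤ) - 1) ×ˢ Finset.Icc (0 : ℤ) ((N : ℤ) - 1)

/-- The number of unordered pairs of distinct points of `S` whose squared
Euclidean distance is `d` (so the distance is `√d`). -/
def distCount (S : Finset (ℤ × ℤ)) (d : ℤ) : ℕ :=
  ((S ×ˢ S).filter (fun p => p.1 ≠ p.2 ∧
    (p.1.1 - p.2.1) ^ 2 + (p.1.2 - p.2.2) ^ 2 = d)).card / 2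

/-- The number of unordered pairs of distinct points of `S` with
coordinate-difference pattern `{|x₁−x₂|, |y₁−y₂|} = {a, b}`. -/
def pairCount (S : Finset (ℤ × ℤ)) (a b : ℤ) : ℕ :=
  ((S ×ˢ S).filter (fun p => p.1 ≠ p.2 ∧
    ((|p.1.1 - p.2.1| = a ∧ |p.1.2 - p.2.2| = b) ∨
     (|p.1.1 - p.2.1| = b ∧ |p.1.2 - p.2.2| = a)))).card / 2

/-- `D_N`: the set of (squared) distances `d` such that `√d` occurs between
two (distinct) points of the N×N lattice. -/
noncomputable def distSet (N : ℕ) : Finset ℤ :=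
  ((latticeN N ×ˢ latticeN N).filter (fun p => p.1 ≠ p.2)).image
    (fun p => (p.1.1 - p.2.1) ^ 2 + (p.1.2 - p.2.2) ^ 2)

theorem stretched_three_by_three (N : ℕ) (hN : 3 ≤ N) (hodd : Odd N)
    (m : ℤ) (hm : (N : ℤ) - 1 = 2 * m)
    (S : Finset (ℤ × ℤ))
    (hS : S = ({0, m, 2 * m} : Finset ℤ) ×ˢ ({0, m, 2 * m} : Finset ℤ)) :
    ∀ a b : ℤ, 0 ≤ b → b ≤ a → a ≤ (N : ℤ) - 1 → (a, b) ≠ (0, 0) →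
      (0 < pairCount S a b ↔ m ∣ a ∧ m ∣ b) := by
  intro a b hb hba ha hne
  have hm1 : 1 ≤ m := by omega
  subst hS
  constructor
  · intro hpos
    unfold pairCount at hpos
    have hne' : ((({0, m, 2 * m} : Finset ℤ) ×ˢ ({0, m, 2 * m} : Finset ℤ)) ×ˢ
        (({0, m, 2 * m} : Finset ℤ) ×ˢ ({0, m, 2 * m} : Finset ℤ))).filter (fun p => p.1 ≠ p.2 ∧
        ((|p.1.1 - p.2.1| = a ∧ |p.1.2 - p.2.2| = b) ∨
         (|p.1.1 - p.2.1| = b ∧ |p.1.2 - p.2.2| = a)))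
        |>.Nonempty := by
      rw [← Finset.card_pos]; omega
    obtain ⟨p, hp⟩ := hne'
    simp only [Finset.mem_filter, Finset.mem_product, Finset.mem_insert,
      Finset.mem_singleton] at hp
    obtain ⟨⟨⟨hx1, hy1⟩, hx2, hy2⟩, _, habs⟩ := hp
    have key : ∀ u v : ℤ, (u = 0 ∨ u = m ∨ u = 2 * m) →
        (v = 0 ∨ v = m ∨ v = 2 * m) → m ∣ |u - v| := by
      intro u v hu hv
      rw [dvd_abs]
      have h1 : m ∣ u := by rcases hu with h|h|h <;> simp [h]
      have h2 : m ∣ v := by rcases hv with h|h|h <;> simp [h]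
      exact dvd_sub h1 h2
    have d1 := key _ _ hx1 hx2
    have d2 := key _ _ hy1 hy2
    rcases habs with ⟨h1, h2⟩ | ⟨h1, h2⟩
    · exact ⟨h1 ▸ d1, h2 ▸ d2⟩
    · exact ⟨h2 ▸ d2, h1 ▸ d1⟩
  · rintro ⟨⟨k, hk⟩, ⟨l, hl⟩⟩
    have hmem : ∀ c : ℤ, 0 ≤ c → c ≤ 2 * m → m ∣ c → (c = 0 ∨ c = m ∨ c = 2 * m) := by
      rintro c hc0 hc2 ⟨j, hj⟩
      have hj0 : 0 ≤ j := nonneg_of_mul_nonneg_right (by omega) (by omega : 0 < m)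
      have hj2 : j ≤ 2 := by nlinarith
      interval_cases j <;> omega
    have ha' := hmem a (le_trans hb hba) (by omega) ⟨k, hk⟩
    have hb' := hmem b hb (by omega) ⟨l, hl⟩
    unfold pairCount
    have hP : ((a, b), ((0 : ℤ), (0 : ℤ))) ∈ ((({0, m, 2 * m} : Finset ℤ) ×ˢ ({0, m, 2 * m} : Finset ℤ)) ×ˢ
        (({0, m, 2 * m} : Finset ℤ) ×ˢ ({0, m, 2 * m} : Finset ℤ))).filter (fun p => p.1 ≠ p.2 ∧
        ((|p.1.1 - p.2.1| = a ∧ |p.1.2 - p.2.2| = b) ∨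
         (|p.1.1 - p.2.1| = b ∧ |p.1.2 - p.2.2| = a))) := by
      simp only [Finset.mem_filter, Finset.mem_product, Finset.mem_insert,
        Finset.mem_singleton]
      refine ⟨⟨⟨ha', hb'⟩, by simp, by simp⟩, ?_, Or.inl ⟨?_, ?_⟩⟩
      · simpa using hne
      · simp [abs_of_nonneg (le_trans hb hba)]
      · simp [abs_of_nonneg hb]
    have hQ : (((0 : ℤ), (0 : ℤ)), (a, b)) ∈ ((({0, m, 2 * m} : Finset ℤ) ×ˢ ({0, m, 2 * m} : Finset ℤ)) ×ˢ
        (({0, m, 2 * m} : Finset ℤ) ×ˢ ({0, m, 2 * m} : Finset ℤ))).filter (fun p => p.1 ≠ p.2 ∧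
        ((|p.1.1 - p.2.1| = a ∧ |p.1.2 - p.2.2| = b) ∨
         (|p.1.1 - p.2.1| = b ∧ |p.1.2 - p.2.2| = a))) := by
      simp only [Finset.mem_filter, Finset.mem_product, Finset.mem_insert,
        Finset.mem_singleton]
      refine ⟨⟨⟨by simp, by simp⟩, ha', hb'⟩, ?_, Or.inl ⟨?_, ?_⟩⟩
      · intro h
        exact (by simpa using hne : ¬(a = 0 ∧ b = 0))
          ⟨((Prod.ext_iff.mp h).1).symm, ((Prod.ext_iff.mp h).2).symm⟩
      · rw [abs_sub_comm]; simp [abs_of_nonneg (le_trans hb hba)]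
      · rw [abs_sub_comm]; simp [abs_of_nonneg hb]
    have hPQ : ((a, b), ((0 : ℤ), (0 : ℤ))) ≠ (((0 : ℤ), (0 : ℤ)), (a, b)) := by
      intro h
      exact (by simpa using hne : ¬(a = 0 ∧ b = 0))
        ⟨(Prod.ext_iff.mp (Prod.ext_iff.mp h).1).1, (Prod.ext_iff.mp (Prod.ext_iff.mp h).1).2⟩
    have h2 : 1 < (((({0, m, 2 * m} : Finset ℤ) ×ˢ ({0, m, 2 * m} : Finset ℤ)) ×ˢ
        (({0, m, 2 * m} : Finset ℤ) ×ˢ ({0, m, 2 * m} : Finset ℤ))).filter (fun p => p.1 ≠ p.2 ∧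
        ((|p.1.1 - p.2.1| = a ∧ |p.1.2 - p.2.2| = b) ∨
         (|p.1.1 - p.2.1| = b ∧ |p.1.2 - p.2.2| = a)))).card :=
      Finset.one_lt_card.mpr ⟨_, hP, _, hQ, hPQ⟩
    omega
end

section
/- Let N ≥ 2 and p ≥ 2 be integers, let F_N = max_{d ∈ D_N} L_{√d} denote the highest distance frequency on the N×N lattice, and suppose N⁴/p² > 2·F_N. Then for every subset S ⊆ L_N with |S| = p, the total error satisfies Σ_{d ∈ D_N} |(N⁴/p²)·S_{√d} − L_{√d}| > Σ_{d ∈ D_N} L_{√d} = C(N², 2); that is, the (unnormalized) error of S strictly exceeds that of the empty subset. -/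
open Finset

section aux

/-- A lexicographic strict comparison on `ℤ × ℤ`. -/
def lexlt (x y : ℤ × ℤ) : Prop := x.1 < y.1 ∨ (x.1 = y.1 ∧ x.2 < y.2)

instance : DecidableRel lexlt := fun x y => by unfold lexlt; infer_instance

lemma lexlt_tricho (x y : ℤ × ℤ) (h : x ≠ y) : lexlt x y ∨ lexlt y x := by
  obtain ⟨a, b⟩ := x; obtain ⟨c, d⟩ := y
  have h' : ¬(a = c ∧ b = d) := by simpa [Prod.ext_iff] using h
  simp only [lexlt]
  omega

lemma lexlt_asymm (x y : ℤ × ℤ) (h1 : lexlt x y) (h2 : lexlt y x) : False := by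
  obtain ⟨a, b⟩ := x; obtain ⟨c, d⟩ := y
  simp only [lexlt] at h1 h2
  omega

lemma even_card_symm (A : Finset ((ℤ × ℤ) × (ℤ × ℤ)))
    (hne : ∀ q ∈ A, q.1 ≠ q.2) (hsw : ∀ q ∈ A, q.swap ∈ A) :
    2 ∣ A.card := by
  classical
  set B := A.filter (fun q => lexlt q.1 q.2) with hB
  set C := A.filter (fun q => lexlt q.2 q.1) with hC
  have hCeq : C = A.filter (fun q => ¬ lexlt q.1 q.2) := by
    apply Finset.filter_congr
    intro q hq
    constructor
    · intro h1 h2; exact lexlt_asymm _ _ h2 h1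
    · intro h1
      rcases lexlt_tricho q.1 q.2 (hne q hq) with h | h
      · exact absurd h h1
      · exact h
  have hsum : B.card + C.card = A.card := by
    rw [hB, hCeq]
    exact Finset.card_filter_add_card_filter_not _
  have hBC : B.card = C.card := by
    apply Finset.card_bij (fun q _ => q.swap)
    · intro q hq
      simp only [hB, Finset.mem_filter] at hq
      simp only [hC, Finset.mem_filter, Prod.fst_swap, Prod.snd_swap]
      exact ⟨hsw q hq.1, hq.2⟩
    · intro q₁ _ q₂ _ h
      exact Prod.swap_injective h
    · intro q hq
      refine ⟨q.swap, ?_, (Prod.swap_swap q).symm⟩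
      simp only [hC, Finset.mem_filter] at hq
      simp only [hB, Finset.mem_filter, Prod.fst_swap, Prod.snd_swap]
      exact ⟨hsw q hq.1, hq.2⟩
  omega

lemma two_dvd_distCard (S : Finset (ℤ × ℤ)) (d : ℤ) :
    2 ∣ ((S ×ˢ S).filter (fun p => p.1 ≠ p.2 ∧
      (p.1.1 - p.2.1) ^ 2 + (p.1.2 - p.2.2) ^ 2 = d)).card := by
  apply even_card_symm
  · intro q hq; exact (Finset.mem_filter.mp hq).2.1
  · intro q hq
    simp only [Finset.mem_filter, Finset.mem_product, Prod.fst_swap, Prod.snd_swap] at hq ⊢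
    obtain ⟨⟨h1, h2⟩, h3, h4⟩ := hq
    exact ⟨⟨h2, h1⟩, Ne.symm h3, by rw [← h4]; ring⟩

lemma sum_distCount (N : ℕ) (S : Finset (ℤ × ℤ)) (hS : S ⊆ latticeN N) :
    ∑ d ∈ distSet N, distCount S d = S.card.choose 2 := by
  classical
  have key : 2 * ∑ d ∈ distSet N, distCount S d = 2 * S.card.choose 2 := by
    rw [Finset.mul_sum]
    have h1 : ∀ d ∈ distSet N, 2 * distCount S d =
        ((S ×ˢ S).filter (fun p => p.1 ≠ p.2 ∧
          (p.1.1 - p.2.1) ^ 2 + (p.1.2 - p.2.2) ^ 2 = d)).card := by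
      intro d _
      exact Nat.mul_div_cancel' (two_dvd_distCard S d) -- distCount unfolds defeq? no
    rw [Finset.sum_congr rfl h1]
    have h2 : S.offDiag.card = ∑ d ∈ distSet N,
        ((S ×ˢ S).filter (fun p => p.1 ≠ p.2 ∧
          (p.1.1 - p.2.1) ^ 2 + (p.1.2 - p.2.2) ^ 2 = d)).card := by
      have := Finset.card_eq_sum_card_fiberwise
        (f := fun p : (ℤ × ℤ) × (ℤ × ℤ) => (p.1.1 - p.2.1) ^ 2 + (p.1.2 - p.2.2) ^ 2)
        (s := S.offDiag) (t := distSet N) ?_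
      · rw [this]
        apply Finset.sum_congr rfl
        intro d _
        congr 1
        ext q; simp only [Finset.mem_filter, Finset.mem_offDiag, Finset.mem_product, and_assoc]
      · intro p hp
        rw [Finset.mem_coe, Finset.mem_offDiag] at hp
        rw [Finset.mem_coe, distSet, Finset.mem_image]
        exact ⟨p, Finset.mem_filter.mpr ⟨Finset.mem_product.mpr ⟨hS hp.1, hS hp.2.1⟩, hp.2.2⟩, rfl⟩
    rw [← h2, Finset.offDiag_card, Nat.choose_two_right]
    have heven : 2 ∣ S.card * (S.card - 1) := by
      rcases Nat.even_or_odd S.card with h | h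
      · exact Dvd.dvd.mul_right h.two_dvd _
      · exact Dvd.dvd.mul_left (Nat.Odd.sub_odd h odd_one).two_dvd _
    rw [Nat.mul_div_cancel' heven]
    have : S.card * S.card - S.card = S.card * (S.card - 1) := by
      rcases Nat.eq_zero_or_pos S.card with h | h
      · simp [h]
      · obtain ⟨n, hn⟩ := Nat.exists_eq_add_of_lt h
        rw [show 0 + n + 1 = n + 1 by omega] at hn
        rw [hn]
        have : (n + 1) * (n + 1) = (n + 1) * n + (n + 1) := by ring
        simp only [Nat.add_sub_cancel]
        omega
    omega
  omega

lemma latticeN_card (N : ℕ) : (latticeN N).card = N ^ 2 := by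
  rw [latticeN, Finset.card_product, Int.card_Icc]
  simp [sq]

end aux

theorem small_subset_error_lower_bound (N p : ℕ) (hN : 2 ≤ N) (hp : 2 ≤ p)
    (F : ℕ) (hF : F = (distSet N).sup (fun d => distCount (latticeN N) d))
    (hbig : 2 * (F : ℚ) < (N : ℚ) ^ 4 / (p : ℚ) ^ 2) :
    (∑ d ∈ distSet N, distCount (latticeN N) d = (N ^ 2).choose 2) ∧
    ∀ S : Finset (ℤ × ℤ), S ⊆ latticeN N → S.card = p →
      (∑ d ∈ distSet N, (distCount (latticeN N) d : ℚ)) <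
        ∑ d ∈ distSet N,
          |((N : ℚ) ^ 4 / (p : ℚ) ^ 2) * (distCount S d : ℚ) -
            (distCount (latticeN N) d : ℚ)| := by
  have part1 : ∑ d ∈ distSet N, distCount (latticeN N) d = (N ^ 2).choose 2 := by
    rw [sum_distCount N (latticeN N) (Finset.Subset.refl _), latticeN_card]
  refine ⟨part1, ?_⟩
  intro S hSsub hScard
  set c : ℚ := (N : ℚ) ^ 4 / (p : ℚ) ^ 2 with hc
  have hc0 : 0 < c := lt_of_le_of_lt (by positivity) hbig
  have hlF : ∀ d ∈ distSet N, (distCount (latticeN N) d : ℚ) ≤ (F : ℚ) := by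
    intro d hd
    exact_mod_cast Nat.cast_le.mpr (hF ▸ Finset.le_sup (f := fun d => distCount (latticeN N) d) hd)
  -- exists d₀ with distCount S d₀ ≥ 1
  have hsumS : ∑ d ∈ distSet N, distCount S d = p.choose 2 := by
    rw [sum_distCount N S hSsub, hScard]
  have hpos : 0 < ∑ d ∈ distSet N, distCount S d := by
    rw [hsumS]; exact Nat.choose_pos hp
  obtain ⟨d₀, hd₀, hd₀pos⟩ : ∃ d ∈ distSet N, 0 < distCount S d := by
    by_contra h
    push_neg at h
    have : ∑ d ∈ distSet N, distCount S d = 0 :=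
      Finset.sum_eq_zero (fun d hd => Nat.le_zero.mp (h d hd))
    omega
  apply Finset.sum_lt_sum
  · intro d hd
    by_cases hz : distCount S d = 0
    · simp [hz, abs_of_nonpos, Nat.cast_nonneg]
    · have h1 : (1 : ℚ) ≤ (distCount S d : ℚ) := by exact_mod_cast Nat.one_le_iff_ne_zero.mpr hz
      have h2 : c ≤ c * (distCount S d : ℚ) := le_mul_of_one_le_right hc0.le h1
      have h3 := hlF d hd
      have : (distCount (latticeN N) d : ℚ) ≤ c * (distCount S d : ℚ) -
          (distCount (latticeN N) d : ℚ) := by linarith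
      exact this.trans (le_abs_self _)
  · refine ⟨d₀, hd₀, ?_⟩
    have h1 : (1 : ℚ) ≤ (distCount S d₀ : ℚ) := by exact_mod_cast hd₀pos
    have h2 : c ≤ c * (distCount S d₀ : ℚ) := le_mul_of_one_le_right hc0.le h1
    have h3 := hlF d₀ hd₀
    have h4 : (F : ℚ) ≥ 0 := Nat.cast_nonneg _
    have : (distCount (latticeN N) d₀ : ℚ) < c * (distCount S d₀ : ℚ) -
        (distCount (latticeN N) d₀ : ℚ) := by linarith
    exact this.trans_le (le_abs_self _)
end

section
/- Let N ≥ 3 be an odd integer and let K_N = {(x,y) ∈ L_N : x + y is even} be the checkerboard lattice. Then for every even integer a with 2 ≤ a ≤ N−1, the number of unordered pairs of distinct points of K_N with coordinate-difference pattern {a, a} is S_{a,a} = (N−a)² + 1. -/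
open Finset

/-- The checkerboard lattice `K_N = {(x,y) ∈ L_N : x + y even}`. -/
noncomputable def checkerboard (N : ℕ) : Finset (ℤ × ℤ) :=
  (latticeN N).filter (fun p => Even (p.1 + p.2))

lemma evens_card (k : ℕ) :
    ((Finset.Icc (0:ℤ) (2*k)).filter (fun y => Even y)).card = k + 1 := by
  have h : (Finset.Icc (0:ℤ) (2*k)).filter (fun y => Even y)
      = (Finset.Icc (0:ℤ) (k:ℤ)).image (fun j => 2*j) := by
    ext x
    simp only [mem_filter, mem_Icc, mem_image, Int.even_iff]
    constructor
    · rintro ⟨⟨h1, h2⟩, h3⟩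
      exact ⟨x / 2, ⟨by omega, by omega⟩, by omega⟩
    · rintro ⟨j, ⟨h1, h2⟩, rfl⟩
      omega
  rw [h, Finset.card_image_of_injective _ (fun u v h => by omega)]
  simp [Int.card_Icc]

lemma odds_card (k : ℕ) :
    ((Finset.Icc (0:ℤ) (2*k)).filter (fun y => ¬ Even y)).card = k := by
  have h := Finset.card_filter_add_card_filter_not
    (s := Finset.Icc (0:ℤ) (2*k)) (p := fun y => Even y)
  rw [evens_card] at h
  have h2 : (Finset.Icc (0:ℤ) (2*k)).card = 2*k+1 := by
    rw [Int.card_Icc]; omega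
  omega

lemma row_card (k : ℕ) (x : ℤ) :
    ((Finset.Icc (0:ℤ) (2*k)).filter (fun y => Even (x+y))).card
      = if Even x then k+1 else k := by
  by_cases hx : Even x
  · have h : (Finset.Icc (0:ℤ) (2*k)).filter (fun y => Even (x+y))
        = (Finset.Icc (0:ℤ) (2*k)).filter (fun y => Even y) :=
      Finset.filter_congr (fun y _ => by simp [Int.even_add, hx])
    rw [h, evens_card, if_pos hx]
  · have h : (Finset.Icc (0:ℤ) (2*k)).filter (fun y => Even (x+y))
        = (Finset.Icc (0:ℤ) (2*k)).filter (fun y => ¬ Even y) :=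
      Finset.filter_congr (fun y _ => by simp [Int.even_add, hx])
    rw [h, odds_card, if_neg hx]

lemma cardB (k : ℕ) :
    (((Finset.Icc (0:ℤ) (2*k)) ×ˢ (Finset.Icc (0:ℤ) (2*k))).filter
      (fun p => Even (p.1+p.2))).card = (k+1)*(k+1) + k*k := by
  rw [Finset.card_filter, Finset.sum_product]
  have h1 : ∀ x ∈ Finset.Icc (0:ℤ) (2*k),
      (∑ y ∈ Finset.Icc (0:ℤ) (2*k), if Even (x+y) then 1 else 0)
        = if Even x then k+1 else k := by
    intro x _
    rw [← Finset.card_filter, row_card]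
  rw [Finset.sum_congr rfl h1, Finset.sum_ite, Finset.sum_const, Finset.sum_const,
    evens_card, odds_card]
  simp [mul_comm]

theorem checkerboard_diagonal_odd_N_even_a (N : ℕ) (hN : 3 ≤ N) (hNodd : Odd N)
    (a : ℤ) (ha : Even a) (ha2 : 2 ≤ a) (haN : a ≤ (N : ℤ) - 1) :
    (pairCount (checkerboard N) a a : ℤ) = ((N : ℤ) - a) ^ 2 + 1 := by
  have ha' : a % 2 = 0 := Int.even_iff.mp ha
  obtain ⟨c, hc⟩ := hNodd
  have hc' : (N : ℤ) = 2*c + 1 := by exact_mod_cast congrArg (Nat.cast : ℕ → ℤ) hc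
  obtain ⟨k, hk⟩ : ∃ k : ℕ, (N:ℤ) - 1 = a + 2*k :=
    ⟨(((N:ℤ) - 1 - a)/2).toNat, by omega⟩
  set Bk := ((Finset.Icc (0:ℤ) (2*k)) ×ˢ (Finset.Icc (0:ℤ) (2*k))).filter
      (fun p => Even (p.1+p.2)) with hBdef
  set g : (ℤ×ℤ) × (Bool×Bool) → (ℤ×ℤ)×(ℤ×ℤ) := fun z =>
    if z.2.1 then ((z.1.1+a, if z.2.2 then z.1.2+a else z.1.2),
                   (z.1.1, if z.2.2 then z.1.2 else z.1.2+a))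
    else ((z.1.1, if z.2.2 then z.1.2 else z.1.2+a),
          (z.1.1+a, if z.2.2 then z.1.2+a else z.1.2)) with hgdef
  have hTeq : ((checkerboard N ×ˢ checkerboard N).filter (fun p => p.1 ≠ p.2 ∧
      ((|p.1.1 - p.2.1| = a ∧ |p.1.2 - p.2.2| = a) ∨
       (|p.1.1 - p.2.1| = a ∧ |p.1.2 - p.2.2| = a))))
      = (Bk ×ˢ (Finset.univ : Finset (Bool×Bool))).image g := by
    have hBmem : ∀ u v : ℤ, (u, v) ∈ Bk ↔ (0 ≤ u ∧ u ≤ 2*k ∧ 0 ≤ v ∧ v ≤ 2*k ∧ (u+v) % 2 = 0) := by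
      intro u v
      simp only [hBdef, mem_filter, mem_product, mem_Icc, Int.even_iff]
      tauto
    have hKmem : ∀ u v : ℤ, (u, v) ∈ checkerboard N ↔
        (0 ≤ u ∧ u ≤ (N:ℤ) - 1 ∧ 0 ≤ v ∧ v ≤ (N:ℤ) - 1 ∧ (u+v) % 2 = 0) := by
      intro u v
      simp only [checkerboard, latticeN, mem_filter, mem_product, mem_Icc, Int.even_iff]
      tauto
    ext ⟨⟨p1,p2⟩,⟨q1,q2⟩⟩
    constructor
    · intro hm
      rw [Finset.mem_filter, Finset.mem_product] at hm
      obtain ⟨⟨hp, hq⟩, hne, hd⟩ := hm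
      rw [or_self] at hd
      obtain ⟨hdx, hdy⟩ := hd
      dsimp only at hdx hdy
      rw [hKmem] at hp hq
      have hx := (abs_eq (by omega : (0:ℤ) ≤ a)).mp hdx
      have hy := (abs_eq (by omega : (0:ℤ) ≤ a)).mp hdy
      rw [Finset.mem_image]
      rcases hx with hx | hx <;> rcases hy with hy | hy
      · refine ⟨((q1, q2), (true, true)), ?_, ?_⟩
        · refine Finset.mem_product.mpr ⟨(hBmem _ _).mpr ?_, Finset.mem_univ _⟩
          omega
        · simp only [hgdef, if_true, Prod.mk.injEq, and_true, true_and] <;> omega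
      · refine ⟨((q1, p2), (true, false)), ?_, ?_⟩
        · refine Finset.mem_product.mpr ⟨(hBmem _ _).mpr ?_, Finset.mem_univ _⟩
          omega
        · simp only [hgdef, if_true, Bool.false_eq_true, if_false, Prod.mk.injEq,
            and_true, true_and] <;> omega
      · refine ⟨((p1, q2), (false, false)), ?_, ?_⟩
        · refine Finset.mem_product.mpr ⟨(hBmem _ _).mpr ?_, Finset.mem_univ _⟩
          omega
        · simp only [hgdef, if_true, Bool.false_eq_true, if_false, Prod.mk.injEq,
            and_true, true_and] <;> omega
      · refine ⟨((p1, p2), (false, true)), ?_, ?_⟩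
        · refine Finset.mem_product.mpr ⟨(hBmem _ _).mpr ?_, Finset.mem_univ _⟩
          omega
        · simp only [hgdef, if_true, Bool.false_eq_true, if_false, Prod.mk.injEq,
            and_true, true_and] <;> omega
    · intro hm
      rw [Finset.mem_image] at hm
      obtain ⟨⟨⟨x, y⟩, s, t⟩, hz, hgz⟩ := hm
      rw [Finset.mem_product, hBmem] at hz
      obtain ⟨⟨hx1, hx2, hy1, hy2, hE⟩, -⟩ := hz
      rw [Finset.mem_filter, Finset.mem_product, hKmem, hKmem, or_self]
      cases s <;> cases t <;>
        simp only [hgdef, if_true, Bool.false_eq_true, if_false, Prod.mk.injEq] at hgz <;>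
        obtain ⟨⟨e1, e2⟩, e3, e4⟩ := hgz <;> subst e1 <;> subst e2 <;> subst e3 <;> subst e4 <;>
        dsimp only <;>
        refine ⟨⟨by omega, by omega⟩, by simp only [ne_eq, Prod.mk.injEq]; omega,
          by rw [abs_eq (by omega : (0:ℤ) ≤ a)]; omega,
          by rw [abs_eq (by omega : (0:ℤ) ≤ a)]; omega⟩
  have hinj : Set.InjOn g ((Bk ×ˢ (Finset.univ : Finset (Bool×Bool))) : Finset _) := by
    rintro ⟨⟨x, y⟩, s, t⟩ _ ⟨⟨x', y'⟩, s', t'⟩ _ h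
    cases s <;> cases t <;> cases s' <;> cases t' <;>
      simp only [hgdef, if_true, if_false, Bool.false_eq_true, Bool.true_eq_false,
        Prod.mk.injEq] at h ⊢ <;>
      first
        | exact ⟨⟨by omega, by omega⟩, rfl, rfl⟩
        | exact ⟨⟨by omega, by omega⟩, trivial⟩
        | exact ⟨⟨by omega, by omega⟩, trivial, trivial⟩
        | (exfalso; omega)
  have hcard : pairCount (checkerboard N) a a = 2*((k+1)*(k+1) + k*k) := by
    unfold pairCount
    rw [hTeq, Finset.card_image_of_injOn hinj, Finset.card_product, Finset.card_univ]
    rw [hBdef, cardB]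
    simp only [Fintype.card_prod, Fintype.card_bool]
    omega
  rw [hcard]
  rw [show ((N:ℤ) - a) = 2*k + 1 by omega]
  push_cast
  ring
end
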